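/- Let k : ℝ → ℝ be a continuous function, and for t > 0 set θ(t) = t·k(t) + log t and γ(t) = ((2 − t)·cos θ(t), (2 − t)·sin θ(t)) ∈ ℝ². Then the set of cluster points of γ along the filter 𝓝[>] 0 (t → 0⁺) is exactly the circle {p ∈ ℝ² : ‖p‖ = 2}: every point p with ‖p‖ = 2 is a cluster point of γ as t → 0⁺, and no point with ‖p‖ ≠ 2 is a cluster point of γ as t → 0⁺. -/

import Mathlib

open Real Filter Topology
open Set

/-- The curve `γ(t) = ((2 − t)·cos θ(t), (2 − t)·sin θ(t))` with
`θ(t) = t·k(t) + log t`, viewed in `ℝ²` with the Euclidean norm. -/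
noncomputable def windingCurve (k : ℝ → ℝ) (t : ℝ) : EuclideanSpace ℝ (Fin 2) :=
  (WithLp.equiv 2 (Fin 2 → ℝ)).symm
    ![(2 - t) * Real.cos (t * k t + Real.log t),
      (2 - t) * Real.sin (t * k t + Real.log t)]

lemma windingCurve_apply0 (k : ℝ → ℝ) (t : ℝ) :
    windingCurve k t 0 = (2 - t) * Real.cos (t * k t + Real.log t) := rfl

lemma windingCurve_apply1 (k : ℝ → ℝ) (t : ℝ) :
    windingCurve k t 1 = (2 - t) * Real.sin (t * k t + Real.log t) := rfl

lemma norm_windingCurve (k : ℝ → ℝ) (t : ℝ) : ‖windingCurve k t‖ = |2 - t| := by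
  have : ‖windingCurve k t‖ = Real.sqrt ((windingCurve k t 0) ^ 2 + (windingCurve k t 1) ^ 2) := by
    rw [EuclideanSpace.norm_eq, Fin.sum_univ_two]
    simp [sq_abs]
  rw [this, windingCurve_apply0, windingCurve_apply1]
  have h : ((2 - t) * Real.cos (t * k t + Real.log t)) ^ 2
      + ((2 - t) * Real.sin (t * k t + Real.log t)) ^ 2 = (2 - t) ^ 2 := by
    have := Real.sin_sq_add_cos_sq (t * k t + Real.log t)
    nlinarith [this]
  rw [h, Real.sqrt_sq_eq_abs]

lemma tendsto_theta_atBot (k : ℝ → ℝ) (hk : Continuous k) :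
    Tendsto (fun t => t * k t + Real.log t) (𝓝[>] (0:ℝ)) atBot := by
  have h1 : Tendsto (fun t : ℝ => t * k t) (𝓝[>] (0:ℝ)) (𝓝 0) := by
    have : Tendsto (fun t : ℝ => t * k t) (𝓝 (0:ℝ)) (𝓝 (0 * k 0)) :=
      (continuous_id.mul hk).tendsto 0
    simpa using this.mono_left nhdsWithin_le_nhds
  exact h1.add_atBot Real.tendsto_log_nhdsGT_zero

/-- The set of cluster points of `γ` as `t → 0⁺` is exactly the circle of radius `2`:
a point `p ∈ ℝ²` is a cluster point of `γ` along `𝓝[>] 0` iff `‖p‖ = 2`. -/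
theorem mapClusterPt_windingCurve_iff (k : ℝ → ℝ) (hk : Continuous k)
    (p : EuclideanSpace ℝ (Fin 2)) :
    MapClusterPt p (𝓝[>] (0 : ℝ)) (windingCurve k) ↔ ‖p‖ = 2 := by
  constructor
  · intro h
    have hT : Tendsto (fun t => ‖windingCurve k t‖) (𝓝[>] (0:ℝ)) (𝓝 2) := by
      have h1 : Tendsto (fun t : ℝ => |2 - t|) (𝓝 (0:ℝ)) (𝓝 (|2 - 0|)) :=
        ((continuous_const.sub continuous_id).abs).tendsto 0
      have h2 := h1.mono_left (nhdsWithin_le_nhds (s := Set.Ioi (0:ℝ)))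
      simp only [sub_zero] at h2
      have : |(2:ℝ)| = 2 := abs_of_pos (by norm_num)
      rw [this] at h2
      refine h2.congr fun t => (norm_windingCurve k t).symm
    have h2 : MapClusterPt ‖p‖ (𝓝[>] (0:ℝ)) ((fun x => ‖x‖) ∘ windingCurve k) :=
      MapClusterPt.continuousAt_comp continuous_norm.continuousAt h
    have h3 : ClusterPt ‖p‖ (𝓝 2) := h2.clusterPt.mono hT
    exact eq_of_nhds_neBot h3
  · intro hp
    -- find angle
    set z : ℂ := ⟨p 0, p 1⟩ with hz
    have habs : ‖z‖ = 2 := by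
      have : ‖p‖ = Real.sqrt ((p 0) ^ 2 + (p 1) ^ 2) := by
        rw [EuclideanSpace.norm_eq, Fin.sum_univ_two]; simp [sq_abs]
      rw [this] at hp
      rw [Complex.norm_def, Complex.normSq_mk]
      rw [show (p 0 * p 0 + p 1 * p 1) = (p 0)^2 + (p 1)^2 by ring]
      exact hp
    set α := Complex.arg z with hα
    have hp0 : p 0 = 2 * Real.cos α := by
      have := Complex.norm_mul_cos_arg z
      rw [habs] at this; exact this.symm
    have hp1 : p 1 = 2 * Real.sin α := by
      have := Complex.norm_mul_sin_arg z
      rw [habs] at this; exact this.symm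
    rw [mapClusterPt_iff_frequently]
    intro s hs
    rw [(nhdsGT_basis (0:ℝ)).frequently_iff]
    intro ε hε
    obtain ⟨δ, hδ, hball⟩ := Metric.mem_nhds_iff.mp hs
    set ε' := min ε δ with hε'
    have hε'pos : 0 < ε' := lt_min hε hδ
    set θ : ℝ → ℝ := fun t => t * k t + Real.log t with hθ
    set b := ε' / 2 with hb
    have hbpos : 0 < b := by positivity
    set n : ℤ := ⌊(θ b - α) / (2 * π)⌋ with hn
    set v := α + n * (2 * π) with hv
    have h2π : (0:ℝ) < 2 * π := by positivity
    have hvb : v ≤ θ b := by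
      have h1 : (n:ℝ) ≤ (θ b - α) / (2 * π) := by
        rw [hn]; exact Int.floor_le _
      have h2 := (le_div_iff₀ h2π).mp h1
      rw [hv]; linarith
    -- find a ∈ (0, b) with θ a ≤ v
    have hbot := tendsto_theta_atBot k hk
    have hev : ∀ᶠ t in 𝓝[>] (0:ℝ), θ t ≤ v := hbot.eventually_le_atBot v
    have hmem : Set.Ioo (0:ℝ) b ∈ 𝓝[>] (0:ℝ) := Ioo_mem_nhdsGT_of_mem ⟨le_refl _, hbpos⟩
    obtain ⟨a, ha, ha2⟩ := (hev.and (eventually_of_mem hmem (fun x hx => hx))).exists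
    obtain ⟨ha0, hab⟩ := ha2
    -- IVT
    have hcont : ContinuousOn θ (Set.Icc a b) := by
      apply ContinuousOn.add
      · exact (continuous_id.mul hk).continuousOn
      · apply Real.continuousOn_log.mono
        intro x hx
        exact ne_of_gt (lt_of_lt_of_le ha0 hx.1)
    have hIcc : Set.Icc (θ a) (θ b) ⊆ θ '' Set.Icc a b :=
      intermediate_value_Icc (le_of_lt hab) hcont
    obtain ⟨t, ht, hθt⟩ := hIcc ⟨ha, hvb⟩
    refine ⟨t, ⟨lt_of_lt_of_le ha0 ht.1, ?_⟩, ?_⟩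
    · calc t ≤ b := ht.2
        _ < ε' := by rw [hb]; linarith
        _ ≤ ε := min_le_left _ _
    · apply hball
      rw [Metric.mem_ball]
      have htpos : 0 < t := lt_of_lt_of_le ha0 ht.1
      have hcos : Real.cos (t * k t + Real.log t) = Real.cos α := by
        have : t * k t + Real.log t = α + n * (2 * π) := by rw [← hv, ← hθt]
        rw [this, Real.cos_add_int_mul_two_pi]
      have hsin : Real.sin (t * k t + Real.log t) = Real.sin α := by
        have : t * k t + Real.log t = α + n * (2 * π) := by rw [← hv, ← hθt]
        rw [this, Real.sin_add_int_mul_two_pi]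
      have hdist : dist (windingCurve k t) p = Real.sqrt ((windingCurve k t 0 - p 0)^2 + (windingCurve k t 1 - p 1)^2) := by
        rw [EuclideanSpace.dist_eq, Fin.sum_univ_two]
        simp [Real.dist_eq, sq_abs]
      rw [hdist, windingCurve_apply0, windingCurve_apply1, hcos, hsin, hp0, hp1]
      have hsq : ((2 - t) * Real.cos α - 2 * Real.cos α)^2 + ((2 - t) * Real.sin α - 2 * Real.sin α)^2 = t^2 := by
        have := Real.sin_sq_add_cos_sq α
        nlinarith [this]
      rw [hsq, Real.sqrt_sq (le_of_lt htpos)]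
      calc t ≤ b := ht.2
        _ < ε' := by rw [hb]; linarith
        _ ≤ δ := min_le_right _ _
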